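/- For any prime p ≥ 11, at least one of the sets {1,3,8,120} and {2,24,40,7812} reduces modulo p to a Diophantine quadruple in F_p (i.e., the four elements are distinct and nonzero mod p and all six pairwise products plus one are squares mod p). -/
import Mathlib

/-- `a, b, c, d` form a Diophantine quadruple in `ZMod p`: they are distinct, nonzero,
and the product of any two distinct ones plus one is a square (0 counts as a square). -/
def IsDiophQuadruple {p : ℕ} (a b c d : ZMod p) : Prop :=
  a ≠ 0 ∧ b ≠ 0 ∧ c ≠ 0 ∧ d ≠ 0 ∧
  a ≠ b ∧ a ≠ c ∧ a ≠ d ∧ b ≠ c ∧ b ≠ d ∧ c ≠ d ∧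
  IsSquare (a * b + 1) ∧ IsSquare (a * c + 1) ∧ IsSquare (a * d + 1) ∧
  IsSquare (b * c + 1) ∧ IsSquare (b * d + 1) ∧ IsSquare (c * d + 1)

lemma aux_dvd (p a b : ℕ) [NeZero p] (hle : b ≤ a) (h : (a : ZMod p) = (b : ZMod p)) :
    p ∣ (a - b) := by
  have h0 : ((a - b : ℕ) : ZMod p) = 0 := by
    rw [Nat.cast_sub hle, h, sub_self]
  exact (ZMod.natCast_eq_zero_iff _ _).mp h0

lemma aux_key (p : ℕ) (hp : p.Prime) (h11 : 11 ≤ p)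
    (hd : p ∣ 1 ∨ p ∣ 3 ∨ p ∣ 8 ∨ p ∣ 2 ∨ p ∣ 7 ∨ p ∣ 119 ∨ p ∣ 5 ∨ p ∣ 117 ∨ p ∣ 112 ∨ p ∣ 120) :
    p = 13 ∨ p = 17 := by
  have hle : p ≤ 120 := by
    rcases hd with h|h|h|h|h|h|h|h|h|h <;>
      have := Nat.le_of_dvd (by norm_num) h <;> omega
  interval_cases p <;> revert hp hd <;> decide

theorem quadruple_mod_p (p : ℕ) (hp : p.Prime) (h11 : 11 ≤ p) :
    IsDiophQuadruple (1 : ZMod p) 3 8 120 ∨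
      IsDiophQuadruple (2 : ZMod p) 24 40 7812 := by
  haveI : NeZero p := ⟨hp.pos.ne'⟩
  by_cases h1317 : p = 13 ∨ p = 17
  · right
    rcases h1317 with rfl | rfl <;> (unfold IsDiophQuadruple; decide)
  · left
    push_neg at h1317
    have key : ∀ n : ℕ, (n = 1 ∨ n = 3 ∨ n = 8 ∨ n = 2 ∨ n = 7 ∨ n = 119 ∨ n = 5 ∨ n = 117 ∨ n = 112 ∨ n = 120) → ¬ (n : ZMod p) = 0 := by
      intro n hn h0
      have hd := (ZMod.natCast_eq_zero_iff _ _).mp h0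
      have := aux_key p hp h11 (by rcases hn with rfl|rfl|rfl|rfl|rfl|rfl|rfl|rfl|rfl|rfl <;> tauto)
      omega
    have ne : ∀ a b : ℕ, b < a → (a = 3 ∧ b = 1 ∨ a = 8 ∧ b = 1 ∨ a = 120 ∧ b = 1 ∨ a = 8 ∧ b = 3 ∨ a = 120 ∧ b = 3 ∨ a = 120 ∧ b = 8) → (a : ZMod p) ≠ (b : ZMod p) := by
      intro a b hlt hab h
      have hd := aux_dvd p a b hlt.le h
      exact key (a - b) (by omega) ((ZMod.natCast_eq_zero_iff _ _).mpr hd)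
    refine ⟨?_, ?_, ?_, ?_, ?_, ?_, ?_, ?_, ?_, ?_,
      ⟨2, by norm_num⟩, ⟨3, by norm_num⟩, ⟨11, by norm_num⟩,
      ⟨5, by norm_num⟩, ⟨19, by norm_num⟩, ⟨31, by norm_num⟩⟩
    · exact_mod_cast key 1 (by tauto)
    · exact_mod_cast key 3 (by tauto)
    · exact_mod_cast key 8 (by tauto)
    · exact_mod_cast key 120 (by tauto)
    · exact fun h => ne 3 1 (by norm_num) (by tauto) (by exact_mod_cast h.symm)
    · exact fun h => ne 8 1 (by norm_num) (by tauto) (by exact_mod_cast h.symm)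
    · exact fun h => ne 120 1 (by norm_num) (by tauto) (by exact_mod_cast h.symm)
    · exact fun h => ne 8 3 (by norm_num) (by tauto) (by exact_mod_cast h.symm)
    · exact fun h => ne 120 3 (by norm_num) (by tauto) (by exact_mod_cast h.symm)
    · exact fun h => ne 120 8 (by norm_num) (by tauto) (by exact_mod_cast h.symm)
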